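/- Let A = [A_{ij}] be an N×N block real matrix with blocks A_{ij} ∈ ℝ^{n_i×n_j}, and let B = diag(B_{11},…,B_{NN}) be block diagonal with B_{ii} ∈ ℝ^{n_i×p_i}. Suppose there exist symmetric positive definite matrices M_i ∈ ℝ^{n_i×n_i} and matrices L_{ij} ∈ ℝ^{p_i×n_j} such that, defining the symmetric block matrix W = [W_{ij}] by W_{ij} := −M_i A_{ji}ᵀ − A_{ij} M_j − L_{ji}ᵀ B_{jj}ᵀ − B_{ii} L_{ij}, the diagonal pivots Ŵ_{ii} of the block Cholesky recursion applied to W are positive definite for all i = 1,…,N. Then A + BK is Hurwitz, where K = [K_{ij}] is the block matrix with blocks K_{ij} = L_{ij} M_j⁻¹ (equivalently K = L M⁻¹ with L = [L_{ij}], M = diag(M_1,…,M_N)). -/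

import Mathlib

open Matrix

/-- The full matrix assembled from an `N × N` family of (possibly rectangular)
blocks (`W i j` is the `(i,j)`-th block, of size `n i × m j`). -/
def ofBlocks {N : ℕ} {n m : Fin N → ℕ}
    (W : ∀ i j : Fin N, Matrix (Fin (n i)) (Fin (m j)) ℝ) :
    Matrix ((i : Fin N) × Fin (n i)) ((j : Fin N) × Fin (m j)) ℝ :=
  Matrix.of fun a b => W a.1 b.1 a.2 b.2

/-- The block diagonal matrix with diagonal blocks `Bd i` (of size `n i × p i`)
and zero off-diagonal blocks. -/
def blockDiagMat {N : ℕ} {n p : Fin N → ℕ}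
    (Bd : ∀ i : Fin N, Matrix (Fin (n i)) (Fin (p i)) ℝ) :
    Matrix ((i : Fin N) × Fin (n i)) ((j : Fin N) × Fin (p j)) ℝ :=
  Matrix.of fun a b =>
    if h : a.1 = b.1 then Bd a.1 a.2 (Fin.cast (congrArg p h).symm b.2) else 0

/-- The block Cholesky recursion:
`Ŵ i j = W i j − Σ_{k < j} Ŵ i k ⬝ (Ŵ k k)⁻¹ ⬝ (Ŵ j k)ᵀ`. -/
noncomputable def chol {N : ℕ} {n : Fin N → ℕ}
    (W : ∀ i j : Fin N, Matrix (Fin (n i)) (Fin (n j)) ℝ)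
    (i j : Fin N) : Matrix (Fin (n i)) (Fin (n j)) ℝ :=
  W i j - ∑ k : Fin N,
    if h : (k : ℕ) < (j : ℕ) then
      chol W i k * (chol W k k)⁻¹ * (chol W j k)ᵀ
    else 0
termination_by (j : ℕ)
decreasing_by all_goals exact h

/-- A real square matrix is Hurwitz if every root in `ℂ` of its characteristic
polynomial has strictly negative real part. -/
def IsHurwitz {I : Type*} [Fintype I] [DecidableEq I] (A : Matrix I I ℝ) : Prop :=
  ∀ z : ℂ, ((A.map (Complex.ofReal)).charpoly).IsRoot z → z.re < 0

open scoped ComplexOrder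
open Polynomial

section Helpers

variable {I : Type*} [Fintype I] [DecidableEq I]

lemma posdef_map_C {P : Matrix I I ℝ} (hP : P.PosDef) :
    (P.map Complex.ofReal).PosDef := by
  classical
  refine Matrix.PosDef.of_dotProduct_mulVec_pos (hP.1.map _ (fun r => by simp [Complex.conj_ofReal])) fun x hx => ?_
  have hsym : ∀ i j, P i j = P j i := fun i j => by
    have := congrFun (congrFun hP.1 i) j
    simpa [conjTranspose_apply] using this.symm
  set a : I → ℝ := fun i => (x i).re with ha
  set b : I → ℝ := fun i => (x i).im with hb
  have expand : star x ⬝ᵥ (P.map Complex.ofReal *ᵥ x)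
      = ∑ i, ∑ j, (P i j : ℂ) * ((starRingEnd ℂ) (x i) * x j) := by
    simp only [dotProduct, mulVec, Matrix.map_apply, Pi.star_apply, Finset.mul_sum]
    refine Finset.sum_congr rfl fun i _ => Finset.sum_congr rfl fun j _ => by
      simp only [RCLike.star_def]; ring
  have hre : (star x ⬝ᵥ (P.map Complex.ofReal *ᵥ x)).re
      = a ⬝ᵥ (P *ᵥ a) + b ⬝ᵥ (P *ᵥ b) := by
    rw [expand]
    simp only [Complex.re_sum, Complex.mul_re, Complex.ofReal_re, Complex.ofReal_im,
      Complex.mul_im, Complex.conj_re, Complex.conj_im, dotProduct, mulVec,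
      Finset.mul_sum, ← Finset.sum_add_distrib]
    refine Finset.sum_congr rfl fun i _ => Finset.sum_congr rfl fun j _ => by ring
  have key : ∀ (g : I → I → ℝ), (∀ i j, g i j = - g j i) → ∑ i, ∑ j, g i j = 0 := by
    intro g hg
    have h1 : ∑ i, ∑ j, g j i = ∑ i, ∑ j, g i j := Finset.sum_comm
    have h2 : ∑ i, ∑ j, g i j = - ∑ i, ∑ j, g j i := by
      rw [← Finset.sum_neg_distrib]
      refine Finset.sum_congr rfl fun i _ => ?_
      rw [← Finset.sum_neg_distrib]
      exact Finset.sum_congr rfl fun j _ => hg i j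
    rw [h1] at h2
    linarith
  have him : (star x ⬝ᵥ (P.map Complex.ofReal *ᵥ x)).im = 0 := by
    rw [expand]
    simp only [Complex.im_sum, Complex.mul_im, Complex.ofReal_re, Complex.ofReal_im,
      Complex.mul_re, Complex.conj_re, Complex.conj_im, zero_mul, add_zero]
    exact key (fun i j => P i j * ((x i).re * (x j).im + -(x i).im * (x j).re))
      (fun i j => by rw [hsym i j]; ring)
  rw [Complex.lt_def]
  constructor
  · simp only [Complex.zero_re, hre]
    have hx' : a ≠ 0 ∨ b ≠ 0 := by
      by_contra h
      push_neg at h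
      apply hx
      funext i
      have h1 := congrFun h.1 i
      have h2 := congrFun h.2 i
      exact Complex.ext (by simpa using h1) (by simpa using h2)
    have hsa : 0 ≤ a ⬝ᵥ (P *ᵥ a) := by
      by_cases h : a = 0
      · simp [h]
      · exact le_of_lt (by simpa using hP.dotProduct_mulVec_pos h)
    have hsb : 0 ≤ b ⬝ᵥ (P *ᵥ b) := by
      by_cases h : b = 0
      · simp [h]
      · exact le_of_lt (by simpa using hP.dotProduct_mulVec_pos h)
    rcases hx' with h | h
    · have := hP.dotProduct_mulVec_pos h; simp only [star_trivial] at this; linarith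
    · have := hP.dotProduct_mulVec_pos h; simp only [star_trivial] at this; linarith
  · simp [him]

lemma eval_charpoly' (M : Matrix I I ℂ) (z : ℂ) :
    M.charpoly.eval z = (z • (1 : Matrix I I ℂ) - M).det := by
  rw [Matrix.charpoly, ← Polynomial.coe_evalRingHom, RingHom.map_det]
  congr 1
  ext i j
  by_cases h : i = j <;>
    simp [h, charmatrix_apply, Matrix.one_apply, Matrix.smul_apply, Matrix.sub_apply,
      Matrix.map_apply]

lemma lyapunov (S P W : Matrix I I ℝ) (hP : P.PosDef) (hW : W.PosDef)
    (hEq : S * P + P * Sᵀ = -W) : IsHurwitz S := by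
  intro z hz
  set Sc := S.map (Complex.ofReal) with hSc
  have hdet : (z • (1 : Matrix I I ℂ) - Scᵀ).det = 0 := by
    have h1 : (z • (1 : Matrix I I ℂ) - Sc).det = 0 := by
      rw [← eval_charpoly']; exact hz
    rw [← Matrix.det_transpose] at h1
    rw [← h1]
    congr 1
    rw [transpose_sub, transpose_smul, transpose_one]
  obtain ⟨u, hu0, hu⟩ := (Matrix.exists_mulVec_eq_zero_iff).2 hdet
  have heig : Scᵀ *ᵥ u = z • u := by
    have := hu
    rw [sub_mulVec, smul_mulVec, one_mulVec, sub_eq_zero] at this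
    exact this.symm
  -- star-eigen relation
  have heig' : Scᵀ *ᵥ star u = (starRingEnd ℂ z) • star u := by
    have hSreal : ∀ i j, (starRingEnd ℂ) (Sc i j) = Sc i j := by
      intro i j; simp [hSc, Matrix.map_apply, Complex.conj_ofReal]
    funext i
    have h2 := congrArg (starRingEnd ℂ) (congrFun heig i)
    simp only [mulVec, dotProduct, map_sum, _root_.map_mul, transpose_apply,
      Pi.smul_apply, smul_eq_mul, hSreal] at h2
    simpa [mulVec, dotProduct, transpose_apply, Pi.smul_apply, smul_eq_mul,
      Pi.star_apply] using h2
  set Pc := P.map (Complex.ofReal) with hPc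
  set Wc := W.map (Complex.ofReal) with hWc
  set c := star u ⬝ᵥ (Pc *ᵥ u) with hc
  have hcpos : 0 < c := (posdef_map_C hP).dotProduct_mulVec_pos hu0
  set w := star u ⬝ᵥ (Wc *ᵥ u) with hw
  have hwpos : 0 < w := (posdef_map_C hW).dotProduct_mulVec_pos hu0
  have hmm : ∀ (X Y : Matrix I I ℝ), (X * Y).map Complex.ofReal
      = X.map Complex.ofReal * Y.map Complex.ofReal := fun X Y => by
    ext i j; simp [Matrix.map_apply, Matrix.mul_apply]
  have key : (starRingEnd ℂ z + z) * c = -w := by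
    have h1 : star u ⬝ᵥ (((S * P).map Complex.ofReal) *ᵥ u) = (starRingEnd ℂ z) * c := by
      rw [hmm, ← mulVec_mulVec, Matrix.dotProduct_mulVec]
      have : star u ᵥ* (S.map Complex.ofReal) = (starRingEnd ℂ z) • star u := by
        rw [show S.map Complex.ofReal = Scᵀᵀ by rw [transpose_transpose],
          Matrix.vecMul_transpose, heig']
      rw [this, smul_dotProduct, hc, smul_eq_mul]
    have h2 : star u ⬝ᵥ (((P * Sᵀ).map Complex.ofReal) *ᵥ u) = z * c := by
      rw [hmm, ← mulVec_mulVec, Matrix.transpose_map]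
      rw [show (S.map Complex.ofReal)ᵀ *ᵥ u = z • u from heig]
      rw [Matrix.mulVec_smul, dotProduct_smul, hc, smul_eq_mul]
    have h3 : (S * P).map Complex.ofReal + (P * Sᵀ).map Complex.ofReal
        = -(W.map Complex.ofReal) := by
      ext i j
      have e := congrFun (congrFun hEq i) j
      simp only [Matrix.add_apply, Matrix.neg_apply, Matrix.map_apply] at *
      rw [← Complex.ofReal_add, e]
      push_cast
      ring
    have h4 : (starRingEnd ℂ z) * c + z * c
        = star u ⬝ᵥ ((-(W.map Complex.ofReal)) *ᵥ u) := by
      rw [← h1, ← h2, ← dotProduct_add, ← Matrix.add_mulVec, h3]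
    rw [add_mul, h4, Matrix.neg_mulVec, dotProduct_neg, hw]
  have hcim : c.im = 0 := by
    have := hcpos; rw [Complex.lt_def] at this; exact this.2.symm
  have hcre : 0 < c.re := by
    have := hcpos; rw [Complex.lt_def] at this; simpa using this.1
  have hwim : w.im = 0 := by
    have := hwpos; rw [Complex.lt_def] at this; exact this.2.symm
  have hwre : 0 < w.re := by
    have := hwpos; rw [Complex.lt_def] at this; simpa using this.1
  have keyre := congrArg Complex.re key
  simp only [Complex.mul_re, Complex.add_re, Complex.add_im, Complex.conj_re,
    Complex.conj_im, Complex.neg_re, hcim, hwim] at keyre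
  nlinarith [keyre, hcre, hwre]

end Helpers

namespace BlockChol

lemma dotProduct_sum' {I β : Type*} [Fintype I] (u : I → ℝ) (s : Finset β) (v : β → I → ℝ) :
    u ⬝ᵥ (∑ b ∈ s, v b) = ∑ b ∈ s, u ⬝ᵥ v b := by
  simp only [dotProduct, Finset.sum_apply, Finset.mul_sum]
  exact Finset.sum_comm

lemma sum_dotProduct' {I β : Type*} [Fintype I] (s : Finset β) (v : β → I → ℝ) (u : I → ℝ) :
    (∑ b ∈ s, v b) ⬝ᵥ u = ∑ b ∈ s, v b ⬝ᵥ u := by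
  simp only [dotProduct, Finset.sum_apply, Finset.sum_mul]
  exact Finset.sum_comm

lemma mulVec_sum' {I J β : Type*} [Fintype I] [Fintype J] (A : Matrix I J ℝ)
    (s : Finset β) (v : β → J → ℝ) :
    A *ᵥ (∑ b ∈ s, v b) = ∑ b ∈ s, A *ᵥ v b := by
  funext i
  simp only [mulVec, dotProduct, Finset.sum_apply, Finset.mul_sum]
  exact Finset.sum_comm

lemma sum_mulVec' {I J β : Type*} [Fintype I] [Fintype J] (s : Finset β)
    (A : β → Matrix I J ℝ) (v : J → ℝ) :
    (∑ b ∈ s, A b) *ᵥ v = ∑ b ∈ s, A b *ᵥ v := by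
  funext i
  simp only [mulVec, dotProduct, Finset.sum_apply, Matrix.sum_apply, Finset.sum_mul]
  exact Finset.sum_comm


variable {N : ℕ} {n p q : Fin N → ℕ}

lemma bd_apply_same (D : ∀ i, Matrix (Fin (n i)) (Fin (p i)) ℝ) (i : Fin N)
    (r : Fin (n i)) (s : Fin (p i)) :
    blockDiagMat D ⟨i, r⟩ ⟨i, s⟩ = D i r s := by
  simp only [blockDiagMat, of_apply, dif_pos rfl]
  exact congrArg (D i r) (Fin.ext rfl)

lemma bd_apply_ne (D : ∀ i, Matrix (Fin (n i)) (Fin (p i)) ℝ) {i j : Fin N}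
    (h : i ≠ j) (r : Fin (n i)) (s : Fin (p j)) :
    blockDiagMat D ⟨i, r⟩ ⟨j, s⟩ = 0 := by
  simp only [blockDiagMat, of_apply]
  exact dif_neg h

lemma blockDiag_mul_ofBlocks (D : ∀ i, Matrix (Fin (n i)) (Fin (p i)) ℝ)
    (K : ∀ i j : Fin N, Matrix (Fin (p i)) (Fin (q j)) ℝ) :
    blockDiagMat D * ofBlocks K = ofBlocks (fun i j => D i * K i j) := by
  ext a b
  rcases a with ⟨i, r⟩
  rcases b with ⟨j, s⟩
  simp only [mul_apply, ofBlocks, blockDiagMat, of_apply]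
  rw [← Finset.univ_sigma_univ, Finset.sum_sigma]
  rw [Finset.sum_eq_single i]
  · refine Finset.sum_congr rfl fun t _ => ?_
    rw [dif_pos rfl]
    congr 1
  · intro c _ hc
    refine Finset.sum_eq_zero fun t _ => ?_
    rw [dif_neg (fun h => hc h.symm), zero_mul]
  · intro h
    exact absurd (Finset.mem_univ i) h

lemma ofBlocks_mul_blockDiag (K : ∀ i j : Fin N, Matrix (Fin (q i)) (Fin (n j)) ℝ)
    (D : ∀ i, Matrix (Fin (n i)) (Fin (p i)) ℝ) :
    ofBlocks K * blockDiagMat D = ofBlocks (fun i j => K i j * D j) := by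
  ext a b
  rcases a with ⟨i, r⟩
  rcases b with ⟨j, s⟩
  simp only [mul_apply, ofBlocks, blockDiagMat, of_apply]
  rw [← Finset.univ_sigma_univ, Finset.sum_sigma]
  rw [Finset.sum_eq_single j]
  · refine Finset.sum_congr rfl fun t _ => ?_
    rw [dif_pos rfl]
    congr 1
  · intro c _ hc
    refine Finset.sum_eq_zero fun t _ => ?_
    rw [dif_neg hc, mul_zero]
  · intro h
    exact absurd (Finset.mem_univ j) h

lemma ofBlocks_transpose (K : ∀ i j : Fin N, Matrix (Fin (n i)) (Fin (p j)) ℝ) :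
    (ofBlocks K)ᵀ = ofBlocks (fun i j => (K j i)ᵀ) := rfl

lemma ofBlocks_add (F G : ∀ i j : Fin N, Matrix (Fin (n i)) (Fin (p j)) ℝ) :
    ofBlocks F + ofBlocks G = ofBlocks (fun i j => F i j + G i j) := rfl

lemma ofBlocks_neg (F : ∀ i j : Fin N, Matrix (Fin (n i)) (Fin (p j)) ℝ) :
    -(ofBlocks F) = ofBlocks (fun i j => -(F i j)) := rfl

lemma posDef_blockDiag (M : ∀ i, Matrix (Fin (n i)) (Fin (n i)) ℝ)
    (hM : ∀ i, (M i).PosDef) : (blockDiagMat M).PosDef := by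
  classical
  refine Matrix.PosDef.of_dotProduct_mulVec_pos ?_ ?_
  · show (blockDiagMat M)ᴴ = blockDiagMat M
    ext a b
    rcases a with ⟨i, r⟩
    rcases b with ⟨j, s⟩
    show star (blockDiagMat M ⟨j, s⟩ ⟨i, r⟩) = blockDiagMat M ⟨i, r⟩ ⟨j, s⟩
    by_cases h : i = j
    · subst h
      rw [bd_apply_same, bd_apply_same, star_trivial]
      have := congrFun (congrFun (hM i).1 s) r
      simpa using this.symm
    · rw [bd_apply_ne M h, bd_apply_ne M (fun hh => h hh.symm), star_zero]
  · intro x hx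
    set xb : ∀ i : Fin N, Fin (n i) → ℝ := fun i r => x ⟨i, r⟩ with hxb
    have hquad : star x ⬝ᵥ (blockDiagMat M *ᵥ x) = ∑ i, xb i ⬝ᵥ (M i *ᵥ xb i) := by
      simp only [star_trivial, dotProduct, mulVec]
      rw [← Finset.univ_sigma_univ, Finset.sum_sigma]
      refine Finset.sum_congr rfl fun i _ => Finset.sum_congr rfl fun r _ => ?_
      congr 1
      rw [Finset.sum_sigma]
      rw [Finset.sum_eq_single i]
      · exact Finset.sum_congr rfl fun t _ => by rw [bd_apply_same M i r t]
      · intro c _ hc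
        refine Finset.sum_eq_zero fun t _ => ?_
        rw [bd_apply_ne M (fun hh => hc hh.symm) r t, zero_mul]
      · intro h
        exact absurd (Finset.mem_univ i) h
    rw [hquad]
    have hex : ∃ i : Fin N, xb i ≠ 0 := by
      by_contra h
      push_neg at h
      exact hx (funext fun a => by
        have := congrFun (h a.1) a.2
        simpa [hxb] using this)
    obtain ⟨i0, hi0⟩ := hex
    refine Finset.sum_pos' (fun i _ => ?_) ⟨i0, Finset.mem_univ i0, ?_⟩
    · by_cases hzi : xb i = 0
      · simp [hzi]
      · have := (hM i).dotProduct_mulVec_pos hzi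
        simpa using this.le
    · have := (hM i0).dotProduct_mulVec_pos hi0
      simpa using this


variable {N : ℕ} {n : Fin N → ℕ}
  (W : ∀ i j : Fin N, Matrix (Fin (n i)) (Fin (n j)) ℝ)

lemma chol_diag_symm (hsym : ∀ i j, (W i j)ᵀ = W j i) :
    ∀ j, (chol W j j)ᵀ = chol W j j := by
  suffices h : ∀ m : ℕ, ∀ j : Fin N, (j : ℕ) = m → (chol W j j)ᵀ = chol W j j by
    exact fun j => h j j rfl
  intro m
  induction m using Nat.strong_induction_on with
  | _ m ih =>
    intro j hj
    conv_lhs => rw [chol]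
    conv_rhs => rw [chol]
    rw [transpose_sub, hsym j j]
    congr 1
    rw [Matrix.transpose_sum]
    refine Finset.sum_congr rfl fun k _ => ?_
    by_cases h : (k : ℕ) < (j : ℕ)
    · rw [dif_pos h, transpose_mul, transpose_mul, transpose_transpose,
        Matrix.transpose_nonsing_inv, ih k (hj ▸ h) k rfl, ← Matrix.mul_assoc]
    · rw [dif_neg h, transpose_zero]

variable (hsym : ∀ i j, (W i j)ᵀ = W j i) (hpiv : ∀ i, (chol W i i).PosDef)

/-- The block lower-triangular factor. -/
noncomputable def Tm (i k : Fin N) : Matrix (Fin (n i)) (Fin (n k)) ℝ :=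
  if (k : ℕ) ≤ (i : ℕ) then chol W i k * (chol W k k)⁻¹ else 0

include hpiv in
lemma inv_mul_pivot (k : Fin N) : (chol W k k)⁻¹ * chol W k k = 1 :=
  Matrix.nonsing_inv_mul _ (isUnit_iff_ne_zero.2 (ne_of_gt (hpiv k).det_pos))

include hpiv in
lemma mul_inv_pivot (k : Fin N) : chol W k k * (chol W k k)⁻¹ = 1 :=
  Matrix.mul_nonsing_inv _ (isUnit_iff_ne_zero.2 (ne_of_gt (hpiv k).det_pos))

include hsym hpiv in
lemma inv_pivot_transpose (k : Fin N) : ((chol W k k)⁻¹)ᵀ = (chol W k k)⁻¹ := by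
  rw [Matrix.transpose_nonsing_inv, chol_diag_symm W hsym]

include hsym hpiv in
lemma chol_decomp_le {i j : Fin N} (hji : (j : ℕ) ≤ (i : ℕ)) :
    W i j = ∑ k, Tm W i k * chol W k k * (Tm W j k)ᵀ := by
  have hterm : ∀ k : Fin N, Tm W i k * chol W k k * (Tm W j k)ᵀ
      = (if h : (k : ℕ) < (j : ℕ) then
          chol W i k * (chol W k k)⁻¹ * (chol W j k)ᵀ else 0)
        + (if k = j then chol W i j else 0) := by
    intro k
    by_cases hkj : (k : ℕ) < (j : ℕ)
    · have hkj' : (k : ℕ) ≤ (j : ℕ) := le_of_lt hkj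
      have hki : (k : ℕ) ≤ (i : ℕ) := le_trans hkj' hji
      have hne : k ≠ j := fun h => by simp [h] at hkj
      rw [dif_pos hkj, if_neg hne, add_zero, Tm, Tm, if_pos hki, if_pos hkj',
        transpose_mul, inv_pivot_transpose W hsym hpiv,
        Matrix.mul_assoc (chol W i k) (chol W k k)⁻¹ (chol W k k),
        ← Matrix.mul_assoc (chol W i k * ((chol W k k)⁻¹ * chol W k k)),
        inv_mul_pivot W hpiv, Matrix.mul_one]
    · rw [dif_neg hkj]
      by_cases hk : k = j
      · subst hk
        rw [if_pos rfl, zero_add, Tm, Tm, if_pos hji, if_pos le_rfl, transpose_mul,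
          inv_pivot_transpose W hsym hpiv, chol_diag_symm W hsym,
          Matrix.mul_assoc (chol W i k) (chol W k k)⁻¹ (chol W k k), inv_mul_pivot W hpiv,
          Matrix.mul_one, Matrix.mul_one]
      · rw [if_neg hk, add_zero]
        have hv : ¬ ((k : ℕ) ≤ (j : ℕ)) := by
          have : (k : ℕ) ≠ (j : ℕ) := fun h => hk (Fin.ext h)
          omega
        have hz : Tm W j k = 0 := by rw [Tm, if_neg hv]
        rw [hz, transpose_zero, Matrix.mul_zero]
  rw [Finset.sum_congr rfl fun k _ => hterm k, Finset.sum_add_distrib,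
    Finset.sum_ite_eq' Finset.univ j (fun _ => chol W i j), if_pos (Finset.mem_univ j),
    show (∑ k : Fin N, if _ : (k : ℕ) < (j : ℕ) then
        chol W i k * (chol W k k)⁻¹ * (chol W j k)ᵀ else 0) = W i j - chol W i j by
      conv_rhs => rw [chol]
      abel]
  abel

include hsym hpiv in
lemma chol_decomp (i j : Fin N) :
    W i j = ∑ k, Tm W i k * chol W k k * (Tm W j k)ᵀ := by
  rcases le_or_gt (j : ℕ) (i : ℕ) with h | h
  · exact chol_decomp_le W hsym hpiv h
  · have h1 := chol_decomp_le W hsym hpiv (le_of_lt h)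
    have h2 := congrArg Matrix.transpose h1
    rw [hsym j i] at h2
    rw [h2, Matrix.transpose_sum]
    refine Finset.sum_congr rfl fun k _ => ?_
    rw [transpose_mul, transpose_mul, transpose_transpose,
      chol_diag_symm W hsym k, ← Matrix.mul_assoc]

include hsym hpiv in
lemma posDef_ofBlocks : (ofBlocks W).PosDef := by
  classical
  refine Matrix.PosDef.of_dotProduct_mulVec_pos ?_ ?_
  · show (ofBlocks W)ᴴ = ofBlocks W
    ext a b
    rcases a with ⟨i, r⟩
    rcases b with ⟨j, s⟩
    show star (ofBlocks W ⟨j, s⟩ ⟨i, r⟩) = ofBlocks W ⟨i, r⟩ ⟨j, s⟩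
    have := congrFun (congrFun (hsym j i) r) s
    simpa [ofBlocks, transpose_apply] using this
  · intro x hx
    set xb : ∀ i : Fin N, Fin (n i) → ℝ := fun i r => x ⟨i, r⟩ with hxb
    -- rewrite the quadratic form blockwise
    have hquad : star x ⬝ᵥ (ofBlocks W *ᵥ x)
        = ∑ i, ∑ j, xb i ⬝ᵥ (W i j *ᵥ xb j) := by
      simp only [star_trivial, dotProduct, mulVec, ofBlocks, of_apply]
      rw [← Finset.univ_sigma_univ, Finset.sum_sigma]
      refine Finset.sum_congr rfl fun i _ => ?_
      refine Eq.trans (Finset.sum_congr rfl fun r _ => ?_) Finset.sum_comm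
      rw [Finset.sum_sigma, Finset.mul_sum]
    have hsub : ∀ i j : Fin N, xb i ⬝ᵥ (W i j *ᵥ xb j)
        = ∑ k, ((Tm W i k)ᵀ *ᵥ xb i) ⬝ᵥ (chol W k k *ᵥ ((Tm W j k)ᵀ *ᵥ xb j)) := by
      intro i j
      rw [chol_decomp W hsym hpiv i j, sum_mulVec', dotProduct_sum']
      refine Finset.sum_congr rfl fun k _ => ?_
      rw [← Matrix.mulVec_mulVec, ← Matrix.mulVec_mulVec, Matrix.dotProduct_mulVec,
        ← Matrix.mulVec_transpose]
    set z : ∀ k : Fin N, Fin (n k) → ℝ := fun k => ∑ i, (Tm W i k)ᵀ *ᵥ xb i with hz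
    have hform : star x ⬝ᵥ (ofBlocks W *ᵥ x) = ∑ k, z k ⬝ᵥ (chol W k k *ᵥ z k) := by
      rw [hquad, Finset.sum_congr rfl fun i _ => Finset.sum_congr rfl fun j _ => hsub i j]
      rw [Finset.sum_congr rfl fun i (_ : i ∈ Finset.univ) => Finset.sum_comm, Finset.sum_comm]
      refine Finset.sum_congr rfl fun k _ => ?_
      rw [hz]
      simp only []
      conv_rhs => rw [sum_dotProduct']
      refine Finset.sum_congr rfl fun i _ => ?_
      conv_rhs => rw [mulVec_sum', dotProduct_sum']
    rw [hform]
    -- find the largest block index where x is nonzero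
    have hex : ∃ i : Fin N, xb i ≠ 0 := by
      by_contra h
      push_neg at h
      exact hx (funext fun a => by
        have := congrFun (h a.1) a.2
        simpa [hxb] using this)
    set s : Finset (Fin N) := Finset.univ.filter (fun i => xb i ≠ 0) with hs
    have hsne : s.Nonempty := by
      obtain ⟨i, hi⟩ := hex
      exact ⟨i, by simp [hs, hi]⟩
    set k0 : Fin N := s.max' hsne with hk0
    have hk0mem : xb k0 ≠ 0 := by
      have := s.max'_mem hsne
      simp only [hs, Finset.mem_filter] at this
      exact this.2
    have hgt : ∀ j : Fin N, (k0 : ℕ) < (j : ℕ) → xb j = 0 := by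
      intro j hj
      by_contra hne
      have hmem : j ∈ s := by simp [hs, hne]
      have := Finset.le_max' s j hmem
      have : (j : ℕ) ≤ (k0 : ℕ) := this
      omega
    have hzk0 : z k0 = xb k0 := by
      rw [hz]
      simp only []
      rw [Finset.sum_eq_single k0]
      · rw [Tm, if_pos le_rfl, transpose_mul, inv_pivot_transpose W hsym hpiv,
          chol_diag_symm W hsym, inv_mul_pivot W hpiv, Matrix.one_mulVec]
      · intro j _ hjne
        rcases lt_or_gt_of_ne (fun h : (j : ℕ) = (k0 : ℕ) => hjne (Fin.ext h)) with h | h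
        · have hTm : Tm W j k0 = 0 := by
            rw [Tm, if_neg (by omega)]
          rw [hTm, transpose_zero, Matrix.zero_mulVec]
        · rw [hgt j h, Matrix.mulVec_zero]
      · intro h
        exact absurd (Finset.mem_univ k0) h
    refine Finset.sum_pos' (fun k _ => ?_) ⟨k0, Finset.mem_univ k0, ?_⟩
    · by_cases hzk : z k = 0
      · simp [hzk]
      · have := (hpiv k).dotProduct_mulVec_pos hzk
        simpa using this.le
    · rw [hzk0]
      have := (hpiv k0).dotProduct_mulVec_pos hk0mem
      simpa using this


end BlockChol

/-- Decentralized full-state feedback stabilization: if there are symmetric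
positive definite `M i` and blocks `L i j` such that all the block Cholesky
pivots of `W i j = −M i ⬝ A j iᵀ − A i j ⬝ M j − L j iᵀ ⬝ B j jᵀ − B i i ⬝ L i j`
are positive definite, then `A + B K` is Hurwitz, where `B = diag(B i i)` and
`K` has blocks `K i j = L i j ⬝ (M j)⁻¹`. -/
theorem stmt14 {N : ℕ} {n p : Fin N → ℕ}
    (A : ∀ i j : Fin N, Matrix (Fin (n i)) (Fin (n j)) ℝ)
    (Bd : ∀ i : Fin N, Matrix (Fin (n i)) (Fin (p i)) ℝ)
    (M : ∀ i : Fin N, Matrix (Fin (n i)) (Fin (n i)) ℝ)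
    (L : ∀ i j : Fin N, Matrix (Fin (p i)) (Fin (n j)) ℝ)
    (hM : ∀ i, (M i).PosDef)
    (hpiv : ∀ i : Fin N,
      (chol (fun i j =>
        -(M i * (A j i)ᵀ) - A i j * M j - (L j i)ᵀ * (Bd j)ᵀ - Bd i * L i j) i i).PosDef) :
    IsHurwitz
      (ofBlocks A + blockDiagMat Bd * ofBlocks (fun i j => L i j * (M j)⁻¹)) := by
  classical
  set Wf : ∀ i j : Fin N, Matrix (Fin (n i)) (Fin (n j)) ℝ :=
    fun i j => -(M i * (A j i)ᵀ) - A i j * M j - (L j i)ᵀ * (Bd j)ᵀ - Bd i * L i j with hWf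
  have hMt : ∀ i, (M i)ᵀ = M i := fun i => by
    ext r s
    have := congrFun (congrFun (hM i).1 r) s
    simpa using this
  have hsymW : ∀ i j, (Wf i j)ᵀ = Wf j i := by
    intro i j
    simp only [hWf]
    rw [transpose_sub, transpose_sub, transpose_sub, transpose_neg, transpose_mul,
      transpose_mul, transpose_mul, transpose_mul, transpose_transpose, transpose_transpose,
      transpose_transpose, hMt i, hMt j]
    abel
  have hW : (ofBlocks Wf).PosDef := BlockChol.posDef_ofBlocks Wf hsymW hpiv
  have hP : (blockDiagMat M).PosDef := BlockChol.posDef_blockDiag M hM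
  set S : Matrix ((i : Fin N) × Fin (n i)) ((j : Fin N) × Fin (n j)) ℝ :=
    ofBlocks A + blockDiagMat Bd * ofBlocks (fun i j => L i j * (M j)⁻¹) with hSdef
  have hS : S = ofBlocks (fun i j => A i j + Bd i * (L i j * (M j)⁻¹)) := by
    rw [hSdef, BlockChol.blockDiag_mul_ofBlocks, BlockChol.ofBlocks_add]
  have h1 : ∀ i, (M i)⁻¹ * M i = 1 := fun i =>
    Matrix.nonsing_inv_mul _ (isUnit_iff_ne_zero.2 (ne_of_gt (hM i).det_pos))
  have h2 : ∀ i, M i * (M i)⁻¹ = 1 := fun i =>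
    Matrix.mul_nonsing_inv _ (isUnit_iff_ne_zero.2 (ne_of_gt (hM i).det_pos))
  have h3 : ∀ i, ((M i)⁻¹)ᵀ = (M i)⁻¹ := fun i => by
    rw [Matrix.transpose_nonsing_inv, hMt i]
  have hEq : S * blockDiagMat M + blockDiagMat M * Sᵀ = -(ofBlocks Wf) := by
    rw [hS, BlockChol.ofBlocks_mul_blockDiag, BlockChol.ofBlocks_transpose,
      BlockChol.blockDiag_mul_ofBlocks, BlockChol.ofBlocks_add, BlockChol.ofBlocks_neg]
    have hfam : ∀ i j : Fin N, (A i j + Bd i * (L i j * (M j)⁻¹)) * M j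
        + M i * (A j i + Bd j * (L j i * (M i)⁻¹))ᵀ = -(Wf i j) := by
      intro i j
      simp only [hWf]
      rw [transpose_add, transpose_mul, transpose_mul, h3 i, Matrix.add_mul, Matrix.mul_add,
        Matrix.mul_assoc (Bd i) (L i j * (M j)⁻¹) (M j),
        Matrix.mul_assoc (L i j) (M j)⁻¹ (M j), h1 j, Matrix.mul_one,
        ← Matrix.mul_assoc (M i) ((M i)⁻¹ * (L j i)ᵀ) (Bd j)ᵀ,
        ← Matrix.mul_assoc (M i) (M i)⁻¹ (L j i)ᵀ, h2 i, Matrix.one_mul]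
      abel
    exact congrArg ofBlocks (funext fun i => funext fun j => hfam i j)
  exact lyapunov S (blockDiagMat M) (ofBlocks Wf) hP hW hEq
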